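/- Under the assumptions of Proposition 5.1(a) (|ν(G)| ≤ K N^{-(k'/2 + λ'/4)} for any product G of k' factors ε_j ε_l R⁻_{j,l} of ε-order λ'), the full overlaps satisfy the same bound: for F = Π_{i=1}^k ε_{j_i} ε_{l_i} R_{j_i,l_i} of ε-order λ, |ν(F)| ≤ K/N^{k/2 + λ/4}. The proof expands each R_{j,l} = R⁻_{j,l} + (ε_j ε_l)/N and uses that deleting j factors from the product decreases the ε-order by at most 2j. -/

import Mathlib

/-- The ε-order of the sub-monomial of `Π_{i=1}^k ε_{j_i}ε_{l_i}R_{j_i,l_i}`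
indexed by `S`: the number of replica indices occurring an odd number of times
among `{j_i, l_i : i ∈ S}`. -/
def epsOrder {k n : ℕ} (j l : Fin k → Fin n) (S : Finset (Fin k)) : ℕ :=
  (Finset.univ.filter fun m : Fin n =>
    Odd (∑ i ∈ S, ((if j i = m then 1 else 0) + (if l i = m then 1 else 0)))).card

/-- Proposition 5.1(b): if `|ν(G)| ≤ K N^{-(k'/2 + λ'/4)}` for every product
`G` of `k'` truncated factors `ε_j ε_l R⁻_{j,l}` of ε-order `λ'`, then the
full overlaps obey the same bound: for
`F = Π_{i=1}^k ε_{j_i} ε_{l_i} R_{j_i,l_i}` of ε-order `λ`,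
`|ν(F)| ≤ C N^{-(k/2 + λ/4)}` with `C` depending only on `k` and `K`.
Configurations are maps `σ : Fin n → ℕ → ℝ` with spins `±1` on the sites
`0,…,N-1`; `ν` is a linear functional determined by the values on spin
configurations; `ε_m = σ_m(N-1)`, `R_{j,l} = N⁻¹ Σ_{i<N} σ_j(i)σ_l(i)` and
`R⁻_{j,l} = N⁻¹ Σ_{i<N-1} σ_j(i)σ_l(i)`. -/
lemma epsOrder_le_aux {k n : ℕ} (j l : Fin k → Fin n) (S : Finset (Fin k)) :
    epsOrder j l Finset.univ ≤ epsOrder j l S + 2 * (k - S.card) := by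
  classical
  set f : Fin k → Fin n → ℕ := fun i m =>
    (if j i = m then 1 else 0) + (if l i = m then 1 else 0) with hf
  have hcard : (Finset.univ \ S).card = k - S.card := by
    rw [Finset.card_sdiff_of_subset (Finset.subset_univ S), Finset.card_univ, Fintype.card_fin]
  have hsub : (Finset.univ.filter fun m : Fin n => Odd (∑ i ∈ Finset.univ, f i m)) ⊆
      (Finset.univ.filter fun m => Odd (∑ i ∈ S, f i m)) ∪
      (Finset.univ.filter fun m => Odd (∑ i ∈ Finset.univ \ S, f i m)) := by
    intro m hm
    simp only [Finset.mem_filter, Finset.mem_union, Finset.mem_univ, true_and] at hm ⊢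
    by_contra h
    push_neg at h
    rw [Nat.not_odd_iff_even, Nat.not_odd_iff_even] at h
    have hsplit : ∑ i ∈ Finset.univ, f i m
        = ∑ i ∈ S, f i m + ∑ i ∈ Finset.univ \ S, f i m := by
      rw [← Finset.sum_union Finset.disjoint_sdiff,
        Finset.union_sdiff_of_subset (Finset.subset_univ S)]
    rw [hsplit] at hm
    exact (Nat.not_odd_iff_even.mpr (h.1.add h.2)) hm
  have hbound : (Finset.univ.filter fun m : Fin n =>
      Odd (∑ i ∈ Finset.univ \ S, f i m)).card ≤ 2 * (k - S.card) := by
    calc (Finset.univ.filter fun m : Fin n => Odd (∑ i ∈ Finset.univ \ S, f i m)).card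
        = ∑ m ∈ Finset.univ.filter (fun m : Fin n => Odd (∑ i ∈ Finset.univ \ S, f i m)), 1 := by
          simp
      _ ≤ ∑ m ∈ Finset.univ.filter (fun m : Fin n => Odd (∑ i ∈ Finset.univ \ S, f i m)),
            ∑ i ∈ Finset.univ \ S, f i m := by
          refine Finset.sum_le_sum fun m hm => ?_
          simp only [Finset.mem_filter] at hm
          exact hm.2.pos
      _ ≤ ∑ m ∈ Finset.univ, ∑ i ∈ Finset.univ \ S, f i m :=
          Finset.sum_le_sum_of_subset (Finset.filter_subset _ _)
      _ = ∑ i ∈ Finset.univ \ S, ∑ m ∈ Finset.univ, f i m := Finset.sum_comm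
      _ = ∑ i ∈ Finset.univ \ S, 2 := by
          refine Finset.sum_congr rfl fun i _ => ?_
          simp [hf, Finset.sum_add_distrib, Finset.sum_ite_eq]
      _ = 2 * (k - S.card) := by
          rw [Finset.sum_const, hcard, smul_eq_mul, Nat.mul_comm]
  calc epsOrder j l Finset.univ
      ≤ ((Finset.univ.filter fun m : Fin n => Odd (∑ i ∈ S, f i m)) ∪
        (Finset.univ.filter fun m : Fin n => Odd (∑ i ∈ Finset.univ \ S, f i m))).card :=
        Finset.card_le_card hsub
    _ ≤ (Finset.univ.filter fun m : Fin n => Odd (∑ i ∈ S, f i m)).card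
        + (Finset.univ.filter fun m : Fin n => Odd (∑ i ∈ Finset.univ \ S, f i m)).card :=
        Finset.card_union_le _ _
    _ ≤ epsOrder j l S + 2 * (k - S.card) := add_le_add le_rfl hbound

theorem full_overlap_eps_order_moment_bound
    (k : ℕ) (K : ℝ) (hK : 0 ≤ K) :
    ∃ C : ℝ, ∀ (N : ℕ), 1 ≤ N → ∀ (n : ℕ) (j l : Fin k → Fin n),
      (∀ i, j i ≠ l i) →
      ∀ ν : ((Fin n → ℕ → ℝ) → ℝ) →ₗ[ℝ] ℝ,
      (∀ f g : (Fin n → ℕ → ℝ) → ℝ,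
        (∀ σ : Fin n → ℕ → ℝ, (∀ m i, σ m i = 1 ∨ σ m i = -1) → f σ = g σ) →
        ν f = ν g) →
      (∀ S : Finset (Fin k),
        |ν (fun σ => ∏ i ∈ S,
            (σ (j i) (N - 1) * σ (l i) (N - 1) *
              ((1 / (N : ℝ)) * ∑ i' ∈ Finset.range (N - 1), σ (j i) i' * σ (l i) i')))|
          ≤ K * (N : ℝ) ^ (-((S.card : ℝ) / 2 + (epsOrder j l S : ℝ) / 4))) →
      |ν (fun σ => ∏ i : Fin k,
          (σ (j i) (N - 1) * σ (l i) (N - 1) *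
            ((1 / (N : ℝ)) * ∑ i' ∈ Finset.range N, σ (j i) i' * σ (l i) i')))|
        ≤ C * (N : ℝ) ^ (-((k : ℝ) / 2 + (epsOrder j l Finset.univ : ℝ) / 4)) := by
  classical
  refine ⟨2 ^ k * K, ?_⟩
  intro N hN n j l hjl ν hν hG
  obtain ⟨M, rfl⟩ : ∃ M, N = M + 1 := ⟨N - 1, by omega⟩
  simp only [Nat.add_sub_cancel] at hG ⊢
  set Np : ℝ := ((M + 1 : ℕ) : ℝ) with hNp
  have hN' : (0 : ℝ) < Np := by positivity
  have h1N : (1 : ℝ) ≤ Np := by rw [hNp]; exact_mod_cast hN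
  set c : ℝ := 1 / Np with hc
  have hc0 : 0 ≤ c := by positivity
  set G : Finset (Fin k) → (Fin n → ℕ → ℝ) → ℝ := fun S σ => ∏ i ∈ S,
      (σ (j i) M * σ (l i) M *
        (c * ∑ i' ∈ Finset.range M, σ (j i) i' * σ (l i) i')) with hGdef
  -- pointwise expansion on spin configurations
  have key : ∀ σ : Fin n → ℕ → ℝ, (∀ m i, σ m i = 1 ∨ σ m i = -1) →
      (∏ i : Fin k, (σ (j i) M * σ (l i) M *
        (c * ∑ i' ∈ Finset.range (M + 1), σ (j i) i' * σ (l i) i')))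
      = ∑ S ∈ Finset.univ, c ^ (k - S.card) * G S σ := by
    intro σ hσ
    have hsq : ∀ m i, σ m i * σ m i = 1 := fun m i => by
      rcases hσ m i with h | h <;> rw [h] <;> norm_num
    have hfac : ∀ i : Fin k,
        σ (j i) M * σ (l i) M *
          (c * ∑ i' ∈ Finset.range (M + 1), σ (j i) i' * σ (l i) i')
        = (σ (j i) M * σ (l i) M *
            (c * ∑ i' ∈ Finset.range M, σ (j i) i' * σ (l i) i')) + c := by
      intro i
      rw [Finset.sum_range_succ]
      have h1 := hsq (j i) M
      have h2 := hsq (l i) M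
      linear_combination (c * σ (l i) M * σ (l i) M) * h1 + c * h2
    calc (∏ i : Fin k, (σ (j i) M * σ (l i) M *
            (c * ∑ i' ∈ Finset.range (M + 1), σ (j i) i' * σ (l i) i')))
        = ∏ i : Fin k, ((σ (j i) M * σ (l i) M *
            (c * ∑ i' ∈ Finset.range M, σ (j i) i' * σ (l i) i')) + c) :=
          Finset.prod_congr rfl fun i _ => hfac i
      _ = ∑ S ∈ Finset.univ.powerset,
            (∏ i ∈ S, (σ (j i) M * σ (l i) M *
              (c * ∑ i' ∈ Finset.range M, σ (j i) i' * σ (l i) i')))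
            * ∏ _i ∈ Finset.univ \ S, c := Finset.prod_add _ _ _
      _ = ∑ S ∈ Finset.univ, c ^ (k - S.card) * G S σ := by
          rw [Finset.powerset_univ]
          refine Finset.sum_congr rfl fun S _ => ?_
          have hcard : (Finset.univ \ S).card = k - S.card := by
            rw [Finset.card_sdiff_of_subset (Finset.subset_univ S), Finset.card_univ, Fintype.card_fin]
          rw [Finset.prod_const, hcard, mul_comm]
  -- linearity
  have hν1 : ν (fun σ => ∏ i : Fin k, (σ (j i) M * σ (l i) M *
        (c * ∑ i' ∈ Finset.range (M + 1), σ (j i) i' * σ (l i) i')))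
      = ∑ S ∈ Finset.univ, c ^ (k - S.card) * ν (G S) := by
    rw [hν _ (fun σ => ∑ S ∈ Finset.univ, c ^ (k - S.card) * G S σ) key]
    have heq : (fun σ => ∑ S ∈ Finset.univ, c ^ (k - S.card) * G S σ)
        = ∑ S ∈ Finset.univ, c ^ (k - S.card) • G S := by
      funext σ
      rw [Finset.sum_apply]
      simp
    rw [heq, map_sum]
    simp
  rw [hν1]
  calc |∑ S ∈ Finset.univ, c ^ (k - S.card) * ν (G S)|
      ≤ ∑ S ∈ Finset.univ, |c ^ (k - S.card) * ν (G S)| :=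
        Finset.abs_sum_le_sum_abs _ _
    _ ≤ ∑ _S ∈ (Finset.univ : Finset (Finset (Fin k))),
          K * Np ^ (-((k : ℝ) / 2 + (epsOrder j l Finset.univ : ℝ) / 4)) := by
        refine Finset.sum_le_sum fun S _ => ?_
        have hSk : S.card ≤ k := by
          simpa using Finset.card_le_univ S
        have hord := epsOrder_le_aux j l S
        rw [abs_mul, abs_of_nonneg (pow_nonneg hc0 _)]
        have hcpow : c ^ (k - S.card) = Np ^ (-(((k - S.card : ℕ) : ℝ))) := by
          rw [Real.rpow_neg hN'.le, Real.rpow_natCast, hc, one_div, inv_pow]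
        calc c ^ (k - S.card) * |ν (G S)|
            ≤ c ^ (k - S.card) *
              (K * Np ^ (-((S.card : ℝ) / 2 + (epsOrder j l S : ℝ) / 4))) :=
              mul_le_mul_of_nonneg_left (hG S) (pow_nonneg hc0 _)
          _ = K * Np ^ ((-(((k - S.card : ℕ) : ℝ)))
                + (-((S.card : ℝ) / 2 + (epsOrder j l S : ℝ) / 4))) := by
              rw [hcpow, Real.rpow_add hN']; ring
          _ ≤ K * Np ^ (-((k : ℝ) / 2 + (epsOrder j l Finset.univ : ℝ) / 4)) := by
              refine mul_le_mul_of_nonneg_left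
                (Real.rpow_le_rpow_of_exponent_le h1N ?_) hK
              have h1 : ((k - S.card : ℕ) : ℝ) = (k : ℝ) - S.card := by
                exact Nat.cast_sub hSk
              have h2 : (epsOrder j l Finset.univ : ℝ)
                  ≤ (epsOrder j l S : ℝ) + 2 * ((k : ℝ) - S.card) := by
                rw [← h1]
                exact_mod_cast hord
              have h3 : (S.card : ℝ) ≤ k := by exact_mod_cast hSk
              rw [h1]
              linarith
    _ = 2 ^ k * K * Np ^ (-((k : ℝ) / 2 + (epsOrder j l Finset.univ : ℝ) / 4)) := by
        rw [Finset.sum_const, Finset.card_univ, Fintype.card_finset, Fintype.card_fin,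
          nsmul_eq_mul, mul_assoc]
        norm_num
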